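/- Let H be a graph such that its line graph L(H) is k-connected. Then for all distinct vertices a, b of H of degree at least k, there exist k pairwise edge-disjoint a,b-paths in H. -/

import Mathlib

/-- The line graph of a simple graph `G`: vertices are the edges of `G`, two
distinct edges are adjacent iff they share an endpoint. -/
def lineGraph {V : Type*} (G : SimpleGraph V) : SimpleGraph G.edgeSet :=
  SimpleGraph.fromRel (fun e f => ∃ v : V, v ∈ (e : Sym2 V) ∧ v ∈ (f : Sym2 V))

/-- `G` is `n`-connected: it has more than `n` vertices and deleting any set of
fewer than `n` vertices leaves a connected graph. -/
def KConnected {V : Type*} [Fintype V] (G : SimpleGraph V) (n : ℕ) : Prop :=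
  n < Fintype.card V ∧
  ∀ S : Finset V, S.card < n → (G.induce ((S : Set V)ᶜ)).Connected

namespace EDP

open Finset List SimpleGraph

variable {V : Type*}

/-! ### Steps of a list and the characteristic flow of a path -/

/-- The consecutive pairs of a list. -/
def steps (l : List V) : List (V × V) := l.zip l.tail

@[simp] lemma steps_nil : steps ([] : List V) = [] := rfl
@[simp] lemma steps_single (x : V) : steps [x] = [] := rfl
@[simp] lemma steps_cons_cons (x y : V) (l : List V) :
    steps (x :: y :: l) = (x, y) :: steps (y :: l) := rfl

lemma mem_of_mem_steps {l : List V} {p : V × V} (h : p ∈ steps l) :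
    p.1 ∈ l ∧ p.2 ∈ l := by
  induction l with
  | nil => simp [steps] at h
  | cons x l ih =>
    cases l with
    | nil => simp [steps] at h
    | cons y m =>
      rcases List.mem_cons.mp h with h | h
      · subst h; simp
      · have := ih h
        exact ⟨List.mem_cons_of_mem _ this.1, List.mem_cons_of_mem _ this.2⟩

lemma not_steps_swap {l : List V} (hn : l.Nodup) {u v : V}
    (h : (u, v) ∈ steps l) : (v, u) ∉ steps l := by
  induction l with
  | nil => simp [steps] at h
  | cons x l ih =>
    cases l with
    | nil => simp [steps] at h
    | cons y m =>
      have hx : x ∉ y :: m := (List.nodup_cons.mp hn).1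
      have hn' : (y :: m).Nodup := (List.nodup_cons.mp hn).2
      have hxy : x ≠ y := fun hEq => hx (by rw [hEq]; exact List.mem_cons_self)
      intro hvu
      rcases List.mem_cons.mp h with h | h <;> rcases List.mem_cons.mp hvu with h' | h' <;>
        (try simp only [Prod.mk.injEq] at h h')
      · exact hxy (h'.1.symm.trans h.2)
      · exact hx (by rw [← h.1]; exact (mem_of_mem_steps h').2)
      · exact hx (by rw [← h'.1]; exact (mem_of_mem_steps h).2)
      · exact ih hn' h h'

lemma steps_chain {r : V → V → Prop} :
    ∀ {x : V} {l : List V}, List.Chain r x l → ∀ p ∈ steps (x :: l), r p.1 p.2 := by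
  intro x l
  induction l generalizing x with
  | nil => intro _ p hp; simp at hp
  | cons y m ih =>
    intro hc p hp
    rcases List.chain_cons.mp hc with ⟨hxy, hc'⟩
    rcases List.mem_cons.mp hp with h | h
    · subst h; exact hxy
    · exact ih hc' p h

variable [DecidableEq V]

/-- The "unit flow along a path" function. -/
def chi (l : List V) (u v : V) : ℤ :=
  (if (u, v) ∈ steps l then 1 else 0) - (if (v, u) ∈ steps l then 1 else 0)

lemma chi_skew (l : List V) (u v : V) : chi l u v = - chi l v u := by
  simp [chi]

lemma chi_le_one (l : List V) (u v : V) : chi l u v ≤ 1 := by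
  unfold chi; split_ifs <;> omega

lemma chi_eq_zero_of_not_steps {l : List V} {u v : V}
    (h1 : (u, v) ∉ steps l) (h2 : (v, u) ∉ steps l) : chi l u v = 0 := by
  simp [chi, h1, h2]

lemma chi_nonpos_of_not_steps {l : List V} {u v : V}
    (h1 : (u, v) ∉ steps l) : chi l u v ≤ 0 := by
  unfold chi; split_ifs <;> omega

lemma chi_eq_one {l : List V} (hn : l.Nodup) {u v : V}
    (h : (u, v) ∈ steps l) : chi l u v = 1 := by
  simp [chi, h, not_steps_swap hn h]

lemma ite_or_add {A B : Prop} [Decidable A] [Decidable B] (h : ¬(A ∧ B)) :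
    (if A ∨ B then (1 : ℤ) else 0) = (if A then 1 else 0) + (if B then 1 else 0) := by
  by_cases hA : A <;> by_cases hB : B <;> simp [hA, hB] <;> tauto

lemma chi_cons_cons {x y : V} {m : List V} (hn : (x :: y :: m).Nodup) (u v : V) :
    chi (x :: y :: m) u v =
      ((if (u, v) = (x, y) then 1 else 0) - (if (v, u) = (x, y) then 1 else 0))
        + chi (y :: m) u v := by
  have hx : x ∉ y :: m := (List.nodup_cons.mp hn).1
  have d1 : ¬((u, v) = (x, y) ∧ (u, v) ∈ steps (y :: m)) := by
    rintro ⟨h, h'⟩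
    obtain ⟨rfl, rfl⟩ := Prod.ext_iff.mp h
    exact hx (mem_of_mem_steps h').1
  have d2 : ¬((v, u) = (x, y) ∧ (v, u) ∈ steps (y :: m)) := by
    rintro ⟨h, h'⟩
    obtain ⟨rfl, rfl⟩ := Prod.ext_iff.mp h
    exact hx (mem_of_mem_steps h').1
  simp only [chi, steps_cons_cons, List.mem_cons]
  rw [ite_or_add d1, ite_or_add d2]
  ring

variable [Fintype V]

lemma chi_sum {u : V} : ∀ (x : V) (l : List V), (x :: l).Nodup →
    ∑ v, chi (x :: l) u v =
      (if u = x then 1 else 0)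
        - (if u = (x :: l).getLast (List.cons_ne_nil _ _) then 1 else 0) := by
  intro x l
  induction l generalizing x with
  | nil =>
    intro _
    simp [chi]
    exact (sub_self _).symm
  | cons y m ih =>
    intro hn
    have hn' : (y :: m).Nodup := (List.nodup_cons.mp hn).2
    have hxy : x ≠ y := by
      have hx : x ∉ y :: m := (List.nodup_cons.mp hn).1
      intro h; exact hx (h ▸ List.mem_cons_self)
    rw [List.getLast_cons_cons]
    calc ∑ v, chi (x :: y :: m) u v
        = ∑ v, (((if (u, v) = (x, y) then 1 else 0) - (if (v, u) = (x, y) then 1 else 0))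
            + chi (y :: m) u v) := by
          apply Finset.sum_congr rfl; intro v _; rw [chi_cons_cons hn]
      _ = (∑ v, ((if (u, v) = (x, y) then (1:ℤ) else 0) - (if (v, u) = (x, y) then 1 else 0)))
            + ∑ v, chi (y :: m) u v := by rw [Finset.sum_add_distrib]
      _ = ((if u = x then 1 else 0) - (if u = y then 1 else 0)) + ∑ v, chi (y :: m) u v := by
          congr 1
          rw [Finset.sum_sub_distrib]
          congr 1
          · simp only [Prod.mk.injEq]
            rcases eq_or_ne u x with rfl | h
            · simp
            · simp [h]
          · simp only [Prod.mk.injEq]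
            rcases eq_or_ne u y with rfl | h
            · simp
            · simp [h]
      _ = _ := by rw [ih y hn']; ring

/-! ### Flows -/

variable {G : SimpleGraph V}

structure IsFlow (G : SimpleGraph V) (a b : V) (f : V → V → ℤ) : Prop where
  skew : ∀ u v, f u v = - f v u
  bound : ∀ u v, f u v ≤ 1
  supp : ∀ u v, f u v ≠ 0 → G.Adj u v
  consrv : ∀ u, u ≠ a → u ≠ b → ∑ v, f u v = 0

lemma isFlow_add_chi {a b : V} {f : V → V → ℤ} (hf : IsFlow G a b f)
    {l : List V} (hc : List.Chain (fun u v => G.Adj u v ∧ f u v ≤ 0) a l)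
    (hn : (a :: l).Nodup) (hl : (a :: l).getLast (List.cons_ne_nil _ _) = b) (hab : a ≠ b) :
    IsFlow G a b (fun u v => f u v + chi (a :: l) u v) ∧
      ∑ v, (f a v + chi (a :: l) a v) = (∑ v, f a v) + 1 := by
  have hst := steps_chain hc
  constructor
  · constructor
    · intro u v; rw [hf.skew, chi_skew]; ring
    · intro u v
      by_cases h1 : (u, v) ∈ steps (a :: l)
      · have h2 : f u v ≤ 0 := (hst (u, v) h1).2
        have := chi_le_one (a :: l) u v
        omega
      · have := chi_nonpos_of_not_steps h1
        have := hf.bound u v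
        omega
    · intro u v hnz
      by_cases hf0 : f u v = 0
      · by_cases h1 : (u, v) ∈ steps (a :: l)
        · exact (hst _ h1).1
        · by_cases h2 : (v, u) ∈ steps (a :: l)
          · exact (hst _ h2).1.symm
          · exact absurd (by rw [hf0, chi_eq_zero_of_not_steps h1 h2]; ring) hnz
      · exact hf.supp u v hf0
    · intro u hA hB
      rw [Finset.sum_add_distrib, hf.consrv u hA hB, chi_sum a l hn, hl]
      simp [hA, hB]
  · rw [Finset.sum_add_distrib, chi_sum a l hn, hl]
    simp [hab]

lemma isFlow_sub_chi {a b : V} {f : V → V → ℤ} (hf : IsFlow G a b f)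
    {l : List V} (hc : List.Chain (fun u v => f u v = 1) a l)
    (hn : (a :: l).Nodup) (hl : (a :: l).getLast (List.cons_ne_nil _ _) = b) (hab : a ≠ b) :
    IsFlow G a b (fun u v => f u v - chi (a :: l) u v) ∧
      ∑ v, (f a v - chi (a :: l) a v) = (∑ v, f a v) - 1 := by
  have hst := steps_chain hc
  constructor
  · constructor
    · intro u v; rw [hf.skew, chi_skew]; ring
    · intro u v
      by_cases h1 : (u, v) ∈ steps (a :: l)
      · have h2 := chi_eq_one hn h1
        have h3 : f u v = 1 := hst _ h1
        omega
      · by_cases h2 : (v, u) ∈ steps (a :: l)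
        · have h3 : f v u = 1 := hst _ h2
          have h4 : f u v = -1 := by rw [hf.skew, h3]
          have := chi_le_one (a :: l) u v
          have : -1 ≤ chi (a :: l) u v := by unfold chi; split_ifs <;> omega
          omega
        · rw [chi_eq_zero_of_not_steps h1 h2]
          have := hf.bound u v; omega
    · intro u v hnz
      by_cases hf0 : f u v = 0
      · by_cases h1 : (u, v) ∈ steps (a :: l)
        · have h3 : f u v = 1 := hst _ h1
          exact hf.supp u v (by rw [h3]; norm_num)
        · by_cases h2 : (v, u) ∈ steps (a :: l)
          · have h3 : f v u = 1 := hst _ h2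
            exact (hf.supp v u (by rw [h3]; norm_num)).symm
          · exact absurd (by rw [hf0, chi_eq_zero_of_not_steps h1 h2]; ring) hnz
      · exact hf.supp u v hf0
    · intro u hA hB
      rw [Finset.sum_sub_distrib, hf.consrv u hA hB, chi_sum a l hn, hl]
      simp [hA, hB]
  · rw [Finset.sum_sub_distrib, chi_sum a l hn, hl]
    simp [hab]

lemma flow_value_cut {a b : V} {f : V → V → ℤ} (hf : IsFlow G a b f) {R : Finset V}
    (haR : a ∈ R) (hbR : b ∉ R) :
    ∑ v, f a v = ∑ p ∈ R ×ˢ Rᶜ, f p.1 p.2 := by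
  have h1 : ∑ u ∈ R, ∑ v, f u v = ∑ v, f a v := by
    apply Finset.sum_eq_single_of_mem a haR
    intro u hu hne
    exact hf.consrv u hne (fun h => hbR (h ▸ hu))
  have h2 : ∑ u ∈ R, ∑ v ∈ R, f u v = 0 := by
    have e1 : ∑ u ∈ R, ∑ v ∈ R, f u v = ∑ v ∈ R, ∑ u ∈ R, f u v := Finset.sum_comm
    have e2 : ∑ v ∈ R, ∑ u ∈ R, f u v = - ∑ u ∈ R, ∑ v ∈ R, f u v := by
      calc ∑ v ∈ R, ∑ u ∈ R, f u v = ∑ u ∈ R, ∑ v ∈ R, (- f u v) := by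
            apply Finset.sum_congr rfl; intro u _
            apply Finset.sum_congr rfl; intro v _
            exact hf.skew v u
        _ = - ∑ u ∈ R, ∑ v ∈ R, f u v := by
            simp [Finset.sum_neg_distrib]
    omega
  calc ∑ v, f a v = ∑ u ∈ R, ∑ v, f u v := h1.symm
    _ = ∑ u ∈ R, (∑ v ∈ R, f u v + ∑ v ∈ Rᶜ, f u v) := by
        apply Finset.sum_congr rfl; intro u _
        rw [Finset.sum_add_sum_compl]
    _ = (∑ u ∈ R, ∑ v ∈ R, f u v) + ∑ u ∈ R, ∑ v ∈ Rᶜ, f u v := Finset.sum_add_distrib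
    _ = ∑ u ∈ R, ∑ v ∈ Rᶜ, f u v := by rw [h2]; ring
    _ = ∑ p ∈ R ×ˢ Rᶜ, f p.1 p.2 := by rw [Finset.sum_product]

/-! ### Deduplicating chains -/

theorem exists_nodup_chain {α : Type*} {r : α → α → Prop} :
    ∀ (n : ℕ) (l : List α), l.length ≤ n → ∀ (a : α), List.Chain r a l →
    ∃ l', List.Chain r a l' ∧ (a :: l').getLast? = (a :: l).getLast? ∧
      (a :: l').Nodup ∧ ∀ x ∈ l', x ∈ l := by
  intro n
  induction n with
  | zero =>
    intro l hl a _
    have : l = [] := List.eq_nil_of_length_eq_zero (Nat.le_zero.mp hl)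
    subst this
    exact ⟨[], List.Chain.nil, rfl, by simp, by simp⟩
  | succ n ih =>
    intro l hl a hc
    by_cases hd : (a :: l).Nodup
    · exact ⟨l, hc, rfl, hd, fun x hx => hx⟩
    by_cases hal : a ∈ l
    · obtain ⟨s, t, rfl⟩ := List.append_of_mem hal
      have hct : List.Chain r a t := ((List.isChain_split (l₁ := a :: s)).mp hc).2
      have hlen : t.length ≤ n := by
        simp only [List.length_append, List.length_cons] at hl; omega
      obtain ⟨l', h1, h2, h3, h4⟩ := ih t hlen a hct
      refine ⟨l', h1, ?_, h3, fun x hx => by simp [h4 x hx]⟩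
      rw [h2]
      have he : a :: (s ++ a :: t) = (a :: s) ++ (a :: t) := by simp
      rw [he, List.getLast?_append_cons]
    · have hll : ¬ l.Nodup := fun h => hd (List.nodup_cons.mpr ⟨hal, h⟩)
      cases l with
      | nil => exact absurd List.nodup_nil hll
      | cons c m =>
        rcases List.chain_cons.mp hc with ⟨hac, hcm⟩
        have hlen : m.length ≤ n := by
          simp only [List.length_cons] at hl; omega
        obtain ⟨l', h1, h2, h3, h4⟩ := ih m hlen c hcm
        have hacl : a ∉ c :: l' := by
          intro h
          rcases List.mem_cons.mp h with h | h
          · exact hal (by rw [h]; exact List.mem_cons_self)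
          · exact hal (List.mem_cons_of_mem _ (h4 _ h))
        exact ⟨c :: l', List.chain_cons.mpr ⟨hac, h1⟩,
          by rw [List.getLast?_cons_cons, h2, List.getLast?_cons_cons],
          List.nodup_cons.mpr ⟨hacl, h3⟩,
          fun x hx => by
            rcases List.mem_cons.mp hx with h | h
            · rw [h]; exact List.mem_cons_self
            · exact List.mem_cons_of_mem _ (h4 _ h)⟩

/-! ### Augmentation -/

lemma getLast_of_getLast? {α : Type*} {a b : α} {l l0 : List α}
    (h : (a :: l).getLast? = (a :: l0).getLast?)
    (h0 : (a :: l0).getLast (List.cons_ne_nil _ _) = b) :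
    (a :: l).getLast (List.cons_ne_nil _ _) = b := by
  rw [List.getLast?_eq_getLast (List.cons_ne_nil _ _),
    List.getLast?_eq_getLast (List.cons_ne_nil _ _)] at h
  rw [Option.some_inj] at h
  rw [h, h0]

lemma exists_flow_succ {a b : V} (hab : a ≠ b) {k : ℕ}
    (hcut : ∀ F : Finset (Sym2 V), F.card < k → (G.deleteEdges ↑F).Reachable a b)
    {f : V → V → ℤ} (hf : IsFlow G a b f) {m : ℕ} (hv : ∑ v, f a v = (m : ℤ)) (hm : m < k) :
    ∃ g, IsFlow G a b g ∧ ∑ v, g a v = (m : ℤ) + 1 := by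
  classical
  by_cases hreach : Relation.ReflTransGen (fun u v => G.Adj u v ∧ f u v ≤ 0) a b
  · obtain ⟨l0, hc0, hlast0⟩ := List.exists_isChain_cons_of_relationReflTransGen hreach
    obtain ⟨l, hc, hl2, hnd, -⟩ := exists_nodup_chain l0.length l0 le_rfl a hc0
    have hlast : (a :: l).getLast (List.cons_ne_nil _ _) = b := getLast_of_getLast? hl2 hlast0
    obtain ⟨hflow, hval⟩ := isFlow_add_chi hf hc hnd hlast hab
    exact ⟨_, hflow, by rw [hval, hv]⟩
  · exfalso
    set R : Finset V :=
      Finset.univ.filter (fun v => Relation.ReflTransGen (fun u v => G.Adj u v ∧ f u v ≤ 0) a v)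
      with hR
    have haR : a ∈ R := by simp only [hR, Finset.mem_filter, Finset.mem_univ, true_and]; exact Relation.ReflTransGen.refl
    have hbR : b ∉ R := by simp [hR]; exact hreach
    have hclosed : ∀ u v, u ∈ R → G.Adj u v → f u v ≤ 0 → v ∈ R := by
      intro u v hu h1 h2
      simp only [hR, Finset.mem_filter, Finset.mem_univ, true_and] at hu ⊢
      exact hu.tail ⟨h1, h2⟩
    have hcross : ∀ p : V × V, p ∈ R ×ˢ Rᶜ → G.Adj p.1 p.2 → f p.1 p.2 = 1 := by
      intro p hp hadj
      rcases Finset.mem_product.mp hp with ⟨h1, h2⟩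
      have h3 : ¬ f p.1 p.2 ≤ 0 := fun h => (Finset.mem_compl.mp h2) (hclosed _ _ h1 hadj h)
      have := hf.bound p.1 p.2; omega
    have hm' : (m : ℤ) = (((R ×ˢ Rᶜ).filter (fun p => G.Adj p.1 p.2)).card : ℤ) := by
      rw [← hv, flow_value_cut hf haR hbR]
      calc ∑ p ∈ R ×ˢ Rᶜ, f p.1 p.2
          = ∑ p ∈ R ×ˢ Rᶜ, (if G.Adj p.1 p.2 then (1 : ℤ) else 0) := by
            apply Finset.sum_congr rfl; intro p hp
            by_cases h : G.Adj p.1 p.2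
            · simp [h, hcross p hp h]
            · have h0 : f p.1 p.2 = 0 := not_not.mp (mt (hf.supp p.1 p.2) h)
              simp [h, h0]
        _ = (((R ×ˢ Rᶜ).filter (fun p => G.Adj p.1 p.2)).card : ℤ) := by
            rw [Finset.sum_boole]
    set F : Finset (Sym2 V) :=
      ((R ×ˢ Rᶜ).filter (fun p => G.Adj p.1 p.2)).image (fun p => s(p.1, p.2)) with hF
    have hFcard : F.card < k := by
      have h1 : F.card ≤ ((R ×ˢ Rᶜ).filter (fun p => G.Adj p.1 p.2)).card :=
        Finset.card_image_le
      have h2 : ((R ×ˢ Rᶜ).filter (fun p => G.Adj p.1 p.2)).card = m := by exact_mod_cast hm'.symm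
      omega
    obtain ⟨w⟩ := hcut F hFcard
    have key : ∀ (x y : V) (w : (G.deleteEdges ↑F).Walk x y), x ∈ R → y ∈ R := by
      intro x y w
      induction w with
      | nil => exact id
      | @cons x z _ hadj p ihw =>
        intro hx
        apply ihw
        rw [SimpleGraph.deleteEdges_adj] at hadj
        by_contra hz
        apply hadj.2
        apply Finset.mem_coe.mpr
        exact Finset.mem_image.mpr ⟨(x, z), Finset.mem_filter.mpr
          ⟨Finset.mem_product.mpr ⟨hx, Finset.mem_compl.mpr hz⟩, hadj.1⟩, rfl⟩
    exact hbR (key a b w haR)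

lemma exists_flow {a b : V} (hab : a ≠ b) {k : ℕ}
    (hcut : ∀ F : Finset (Sym2 V), F.card < k → (G.deleteEdges ↑F).Reachable a b) :
    ∃ f, IsFlow G a b f ∧ ∑ v, f a v = (k : ℤ) := by
  suffices h : ∀ m, m ≤ k → ∃ f, IsFlow G a b f ∧ ∑ v, f a v = (m : ℤ) from h k le_rfl
  intro m
  induction m with
  | zero =>
    intro _
    exact ⟨fun _ _ => 0, ⟨by simp, by simp, by simp, by simp⟩, by simp⟩
  | succ m ihm =>
    intro hmk
    obtain ⟨f, hf, hv⟩ := ihm (by omega)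
    obtain ⟨g, hg, hgv⟩ := exists_flow_succ hab hcut hf hv (by omega)
    exact ⟨g, hg, by rw [hgv]; push_cast; ring⟩

/-! ### Walks from chains -/

def walkOfChain (G : SimpleGraph V) : ∀ (x : V) (l : List V), List.Chain G.Adj x l →
    G.Walk x ((x :: l).getLast (List.cons_ne_nil _ _))
  | _, [], _ => SimpleGraph.Walk.nil
  | x, y :: l, h =>
    (SimpleGraph.Walk.cons (List.chain_cons.mp h).1
      (walkOfChain G y l (List.chain_cons.mp h).2)).copy rfl
      List.getLast_cons_cons.symm

lemma walkOfChain_support (G : SimpleGraph V) :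
    ∀ (x : V) (l : List V) (h : List.Chain G.Adj x l),
      (walkOfChain G x l h).support = x :: l := by
  intro x l
  induction l generalizing x with
  | nil => intro h; rfl
  | cons y m ih =>
    intro h
    rw [walkOfChain, SimpleGraph.Walk.support_copy, SimpleGraph.Walk.support_cons]
    exact congrArg (x :: ·) (ih y _)

lemma walkOfChain_darts (G : SimpleGraph V) :
    ∀ (x : V) (l : List V) (h : List.Chain G.Adj x l) (d : G.Dart),
      d ∈ (walkOfChain G x l h).darts → (d.fst, d.snd) ∈ steps (x :: l) := by
  intro x l
  induction l generalizing x with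
  | nil => intro h d hd; simp [walkOfChain] at hd
  | cons y m ih =>
    intro h d hd
    rw [walkOfChain, SimpleGraph.Walk.darts_copy, SimpleGraph.Walk.darts_cons] at hd
    rcases List.mem_cons.mp hd with hd | hd
    · rw [hd]; exact List.mem_cons_self
    · exact List.mem_cons_of_mem _ (ih y (List.chain_cons.mp h).2 d hd)

/-! ### Flow decomposition -/

lemma decompose {a b : V} (hab : a ≠ b) :
    ∀ (k : ℕ) (f : V → V → ℤ), IsFlow G a b f → ∑ v, f a v = (k : ℤ) →
    ∃ P : Fin k → G.Walk a b, (∀ i, (P i).IsPath) ∧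
      (∀ i, ∀ d ∈ (P i).darts, f d.fst d.snd = 1) ∧
      (∀ i j, i ≠ j → ∀ e ∈ (P i).edges, e ∉ (P j).edges) := by
  intro k
  induction k with
  | zero =>
    intro f _ _
    exact ⟨fun i => i.elim0, fun i => i.elim0, fun i => i.elim0, fun i => i.elim0⟩
  | succ k ih =>
    intro f hf hv
    classical
    have hreach : Relation.ReflTransGen (fun u v => f u v = 1) a b := by
      by_contra hreach
      set R : Finset V :=
        Finset.univ.filter (fun v => Relation.ReflTransGen (fun u v => f u v = 1) a v) with hR
      have haR : a ∈ R := by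
        simp only [hR, Finset.mem_filter, Finset.mem_univ, true_and]
        exact Relation.ReflTransGen.refl
      have hbR : b ∉ R := by simp [hR]; exact hreach
      have hle : ∑ v, f a v ≤ 0 := by
        rw [flow_value_cut hf haR hbR]
        apply Finset.sum_nonpos
        intro p hp
        rcases Finset.mem_product.mp hp with ⟨h1, h2⟩
        have hnr : ¬ f p.1 p.2 = 1 := by
          intro h
          apply Finset.mem_compl.mp h2
          simp only [hR, Finset.mem_filter, Finset.mem_univ, true_and] at h1 ⊢
          exact h1.tail h
        have := hf.bound p.1 p.2
        omega
      rw [hv] at hle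
      omega
    obtain ⟨l0, hc0, hlast0⟩ := List.exists_isChain_cons_of_relationReflTransGen hreach
    obtain ⟨l, hc, hl2, hnd, -⟩ := exists_nodup_chain l0.length l0 le_rfl a hc0
    have hlast : (a :: l).getLast (List.cons_ne_nil _ _) = b := getLast_of_getLast? hl2 hlast0
    have hcAdj : List.Chain G.Adj a l :=
      List.Chain.imp (fun u v h => hf.supp u v (by rw [h]; norm_num)) hc
    set W0 : G.Walk a b := (walkOfChain G a l hcAdj).copy rfl hlast with hW0
    have hW0support : W0.support = a :: l := by
      rw [hW0, SimpleGraph.Walk.support_copy, walkOfChain_support]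
    have hW0path : W0.IsPath := by rw [SimpleGraph.Walk.isPath_def, hW0support]; exact hnd
    have hst := steps_chain hc
    have hW0darts : ∀ d ∈ W0.darts, (d.fst, d.snd) ∈ steps (a :: l) := by
      intro d hd
      rw [hW0, SimpleGraph.Walk.darts_copy] at hd
      exact walkOfChain_darts G a l hcAdj d hd
    have hW0f : ∀ d ∈ W0.darts, f d.fst d.snd = 1 := fun d hd => hst _ (hW0darts d hd)
    obtain ⟨hgflow, hgval⟩ := isFlow_sub_chi hf hc hnd hlast hab
    set g : V → V → ℤ := fun u v => f u v - chi (a :: l) u v with hg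
    have hgval' : ∑ v, g a v = (k : ℤ) := by
      show ∑ v, (f a v - chi (a :: l) a v) = (k : ℤ)
      rw [hgval, hv]; push_cast; ring
    obtain ⟨P', hP'path, hP'darts, hP'disj⟩ := ih g hgflow hgval'
    have hzero : ∀ u v, (u, v) ∈ steps (a :: l) → g u v = 0 ∧ g v u = 0 := by
      intro u v hs
      have h1 : f u v = 1 := hst _ hs
      have h2 : chi (a :: l) u v = 1 := chi_eq_one hnd hs
      have h3 : g u v = 0 := by simp [hg, h1, h2]
      exact ⟨h3, by rw [hgflow.skew, h3]; ring⟩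
    have hkeep : ∀ u v, g u v = 1 →
        f u v = 1 ∧ (u, v) ∉ steps (a :: l) ∧ (v, u) ∉ steps (a :: l) := by
      intro u v h1
      have hs : (u, v) ∉ steps (a :: l) := fun hs => by
        rw [(hzero u v hs).1] at h1; exact absurd h1 (by norm_num)
      have hs' : (v, u) ∉ steps (a :: l) := fun hs' => by
        rw [(hzero v u hs').2] at h1; exact absurd h1 (by norm_num)
      refine ⟨?_, hs, hs'⟩
      have hchi := chi_eq_zero_of_not_steps hs hs'
      have : g u v = f u v - chi (a :: l) u v := rfl
      omega
    have hW0P' : ∀ i, ∀ e, e ∈ W0.edges → e ∉ (P' i).edges := by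
      intro i e he he'
      rw [SimpleGraph.Walk.edges] at he he'
      obtain ⟨d, hd, rfl⟩ := List.mem_map.mp he
      obtain ⟨d', hd', hde⟩ := List.mem_map.mp he'
      have h1 : g d'.fst d'.snd = 1 := hP'darts i d' hd'
      have h2 := (hkeep _ _ h1).2
      have hsd : (d.fst, d.snd) ∈ steps (a :: l) := hW0darts d hd
      rw [SimpleGraph.Dart.edge, SimpleGraph.Dart.edge, Sym2.mk_eq_mk_iff] at hde
      rcases hde with hde | hde
      · apply h2.1
        have : (d'.fst, d'.snd) = (d.fst, d.snd) := by
          rw [show (d'.fst, d'.snd) = d'.toProd from rfl,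
            show (d.fst, d.snd) = d.toProd from rfl, hde]
        rw [this]; exact hsd
      · apply h2.2
        have : (d'.snd, d'.fst) = (d.fst, d.snd) := by
          have := congrArg Prod.swap hde
          simp at this
          rw [show (d'.snd, d'.fst) = d'.toProd.swap from rfl, this,
            show d.toProd = (d.fst, d.snd) from rfl]
        rw [this]; exact hsd
    refine ⟨Fin.cons W0 P', ?_, ?_, ?_⟩
    · intro i
      refine Fin.cases ?_ ?_ i
      · simpa using hW0path
      · intro j; simpa using hP'path j
    · intro i
      refine Fin.cases ?_ ?_ i
      · simpa using hW0f
      · intro j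
        simp only [Fin.cons_succ]
        intro d hd
        exact (hkeep _ _ (hP'darts j d hd)).1
    · intro i j hij e hei hej
      rcases Fin.eq_zero_or_eq_succ i with rfl | ⟨i', rfl⟩ <;>
        rcases Fin.eq_zero_or_eq_succ j with rfl | ⟨j', rfl⟩
      · exact hij rfl
      · simp only [Fin.cons_zero, Fin.cons_succ] at hei hej
        exact hW0P' j' e hei hej
      · simp only [Fin.cons_zero, Fin.cons_succ] at hei hej
        exact hW0P' i' e hej hei
      · simp only [Fin.cons_succ] at hei hej
        exact hP'disj i' j' (fun h => hij (by rw [h])) e hei hej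

end EDP

section Main

open SimpleGraph

variable {V : Type*} [Fintype V] [DecidableEq V]

lemma reach_within_edge {H : SimpleGraph V} {F : Set (Sym2 V)} {e : Sym2 V}
    (he : e ∈ H.edgeSet) (heF : e ∉ F) {x y : V} (hx : x ∈ e) (hy : y ∈ e) :
    (H.deleteEdges F).Reachable x y := by
  rcases eq_or_ne x y with rfl | hxy
  · exact Reachable.refl x
  · have hxy' : e = s(x, y) := (Sym2.mem_and_mem_iff hxy).mp ⟨hx, hy⟩
    subst hxy'
    exact SimpleGraph.Adj.reachable (by rw [deleteEdges_adj]; exact ⟨H.mem_edgeSet.mp he, heF⟩)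

lemma lineWalk_reach (H : SimpleGraph V) (F : Finset (Sym2 V)) (T : Set H.edgeSet)
    (hT : ∀ e : H.edgeSet, e ∈ T → (e : Sym2 V) ∉ (↑F : Set (Sym2 V))) :
    ∀ {ε φ : ↥T} (_ : ((_root_.lineGraph H).induce T).Walk ε φ) (x y : V),
      x ∈ ((ε : H.edgeSet) : Sym2 V) → y ∈ ((φ : H.edgeSet) : Sym2 V) →
      (H.deleteEdges ↑F).Reachable x y := by
  intro ε φ w
  induction w with
  | nil =>
    rename_i ε'
    intro x y hx hy
    exact reach_within_edge (ε' : H.edgeSet).2 (hT _ ε'.2) hx hy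
  | @cons ε ψ φ' hadj p ih =>
    intro x y hx hy
    have hadj' : (_root_.lineGraph H).Adj ↑ε ↑ψ := hadj
    rw [_root_.lineGraph, fromRel_adj] at hadj'
    obtain ⟨hne, hsh⟩ := hadj'
    have hz : ∃ z : V, z ∈ ((ε : H.edgeSet) : Sym2 V) ∧ z ∈ ((ψ : H.edgeSet) : Sym2 V) := by
      rcases hsh with ⟨z, h1, h2⟩ | ⟨z, h1, h2⟩
      · exact ⟨z, h1, h2⟩
      · exact ⟨z, h2, h1⟩
    obtain ⟨z, hz1, hz2⟩ := hz
    exact (reach_within_edge (ε : H.edgeSet).2 (hT _ ε.2) hx hz1).trans (ih z y hz2 hy)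

end Main


/-- If the line graph of `H` is `k`-connected, then any two distinct vertices of
`H` of degree at least `k` are joined by `k` pairwise edge-disjoint paths. -/
theorem edge_disjoint_paths_of_lineGraph_connected {V : Type*} [Fintype V]
    [DecidableEq V] (H : SimpleGraph V) [DecidableRel H.Adj] [Fintype H.edgeSet]
    (k : ℕ) (hconn : KConnected (lineGraph H) k)
    (a b : V) (hab : a ≠ b) (ha : k ≤ H.degree a) (hb : k ≤ H.degree b) :
    ∃ P : Fin k → H.Walk a b, (∀ i, (P i).IsPath) ∧
      ∀ i j, i ≠ j → ∀ e, e ∈ (P i).edges → e ∉ (P j).edges := by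
  classical
  have hcut : ∀ F : Finset (Sym2 V), F.card < k → (H.deleteEdges ↑F).Reachable a b := by
    intro F hF
    set S : Finset H.edgeSet := Finset.univ.filter (fun e => (e : Sym2 V) ∈ F) with hS
    have hScard : S.card < k := by
      have h1 : S.card ≤ F.card := by
        apply Finset.card_le_card_of_injOn (f := fun e : H.edgeSet => (e : Sym2 V))
        · intro e he
          simp only [hS, Finset.mem_coe, Finset.mem_filter, Finset.mem_univ, true_and] at he
          exact he
        · exact Set.injOn_of_injective Subtype.val_injective
      omega
    have hc := hconn.2 S hScard
    have hea : ∃ e ∈ H.incidenceFinset a, e ∉ F := by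
      by_contra h
      push_neg at h
      have h2 := Finset.card_le_card h
      rw [SimpleGraph.card_incidenceFinset_eq_degree] at h2
      omega
    have heb : ∃ e ∈ H.incidenceFinset b, e ∉ F := by
      by_contra h
      push_neg at h
      have h2 := Finset.card_le_card h
      rw [SimpleGraph.card_incidenceFinset_eq_degree] at h2
      omega
    obtain ⟨e, he, heF⟩ := hea
    obtain ⟨f, hf, hfF⟩ := heb
    rw [SimpleGraph.mem_incidenceFinset] at he hf
    have hT : ∀ ε : H.edgeSet, ε ∈ ((↑S : Set H.edgeSet)ᶜ) →
        (ε : Sym2 V) ∉ (↑F : Set (Sym2 V)) := by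
      intro ε hε
      simp only [Set.mem_compl_iff, Finset.mem_coe, hS, Finset.mem_filter, Finset.mem_univ,
        true_and] at hε
      exact hε
    set ε : ↥((↑S : Set H.edgeSet)ᶜ) := ⟨⟨e, he.1⟩, by
      simp only [Set.mem_compl_iff, Finset.mem_coe, hS, Finset.mem_filter, Finset.mem_univ,
        true_and]
      exact heF⟩ with hε
    set φ : ↥((↑S : Set H.edgeSet)ᶜ) := ⟨⟨f, hf.1⟩, by
      simp only [Set.mem_compl_iff, Finset.mem_coe, hS, Finset.mem_filter, Finset.mem_univ,
        true_and]
      exact hfF⟩ with hφ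
    obtain ⟨w⟩ := hc.preconnected ε φ
    exact lineWalk_reach H F _ hT w a b he.2 hf.2
  obtain ⟨fl, hfl, hv⟩ := EDP.exists_flow hab hcut
  obtain ⟨P, h1, _, h3⟩ := EDP.decompose hab k fl hfl hv
  exact ⟨P, h1, fun i j hij e hei => h3 i j hij e hei⟩
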